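/- For every ϑ ∈ {p, bp, r}, the inclusion ∫L_u ⊆ H_ϑ holds and is strict: every x with Σ_{k,l=1}^∞ kl|x_{k,l}| < ∞ satisfies Σ_{k,l=1}^∞ kl|Δx_{k,l}| ≤ 4 Σ_{k,l=1}^∞ kl|x_{k,l}| < ∞ and lies in C_{ϑ0}, while the double sequence x_{k,l} = 1/(kl)² belongs to H_ϑ but not to ∫L_u. -/

import Mathlib

open Filter Topology

noncomputable section

/-- The set `Ω` of all complex double sequences (0-indexed: entry `x k l`
corresponds to the paper's `x_{k+1,l+1}`). -/
abbrev DSeq : Type := ℕ → ℕ → ℂ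

/-- The double (forward) difference operator `Δ`. -/
def dDiff (x : DSeq) (k l : ℕ) : ℂ :=
  x k l - x (k + 1) l - x k (l + 1) + x (k + 1) (l + 1)

/-- Pringsheim (p-) convergence of a double sequence to `L`. -/
def PConv (x : DSeq) (L : ℂ) : Prop :=
  ∀ ε > (0 : ℝ), ∃ N : ℕ, ∀ k ≥ N, ∀ l ≥ N, ‖x k l - L‖ < ε

/-- Boundedness of a double sequence. -/
def DBounded (x : DSeq) : Prop :=
  ∃ M : ℝ, ∀ k l : ℕ, ‖x k l‖ ≤ M

/-- bp-convergence: bounded Pringsheim convergence. -/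
def BPConv (x : DSeq) (L : ℂ) : Prop := PConv x L ∧ DBounded x

/-- r-convergence (regular convergence). -/
def RConv (x : DSeq) (L : ℂ) : Prop :=
  PConv x L ∧ (∀ k : ℕ, ∃ c : ℂ, Tendsto (fun l => x k l) atTop (nhds c)) ∧
    (∀ l : ℕ, ∃ c : ℂ, Tendsto (fun k => x k l) atTop (nhds c))

/-- The three convergence notions ϑ ∈ {p, bp, r}. -/
inductive Theta | p | bp | r

/-- ϑ-convergence. -/
def ThConv : Theta → DSeq → ℂ → Prop
  | Theta.p => PConv
  | Theta.bp => BPConv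
  | Theta.r => RConv

/-- `Σ_{k,l} kl |Δx_{k,l}| < ∞` (0-indexed, so the weight is `(k+1)(l+1)`). -/
def HahnSummable (x : DSeq) : Prop :=
  Summable (fun kl : ℕ × ℕ =>
    (((kl.1 + 1) * (kl.2 + 1) : ℕ) : ℝ) * ‖dDiff x kl.1 kl.2‖)

/-- The Hahn double sequence space `H_ϑ`. -/
def Hahn (θ : Theta) : Set DSeq := {x | HahnSummable x ∧ ThConv θ x 0}

/-- `‖x‖_H = Σ_{k,l} kl |Δx_{k,l}|`. -/
def hNorm (x : DSeq) : ℝ :=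
  ∑' kl : ℕ × ℕ, (((kl.1 + 1) * (kl.2 + 1) : ℕ) : ℝ) * ‖dDiff x kl.1 kl.2‖

/-- Rectangular partial sums of the products `a_{k,l} x_{k,l}`. -/
def pSum (a x : DSeq) (m n : ℕ) : ℂ :=
  ∑ k ∈ Finset.range (m + 1), ∑ l ∈ Finset.range (n + 1), a k l * x k l

/-- Rectangular partial sums of `a`. -/
def rectSum (a : DSeq) (m n : ℕ) : ℂ :=
  ∑ k ∈ Finset.range (m + 1), ∑ l ∈ Finset.range (n + 1), a k l

/-- The space `P_∞`: `sup_{m,n} (1/(mn)) |Σ_{k≤m,l≤n} a_{k,l}| < ∞`. -/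
def Pinf (a : DSeq) : Prop :=
  ∃ C : ℝ, ∀ m n : ℕ,
    (1 / (((m : ℝ) + 1) * ((n : ℝ) + 1))) * ‖rectSum a m n‖ ≤ C

/-- `L_u`: absolutely summable double sequences. -/
def Lu : Set DSeq := {x | Summable (fun kl : ℕ × ℕ => ‖x kl.1 kl.2‖)}

/-- `M_u`: bounded double sequences. -/
def Mu : Set DSeq := {x | DBounded x}

/-- `C_bp`: bp-convergent double sequences. -/
def Cbp : Set DSeq := {x | ∃ L : ℂ, BPConv x L}

/-- The integrated space `∫L_u = {x : Σ_{k,l} kl |x_{k,l}| < ∞}`. -/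
def intLu : Set DSeq :=
  {x | Summable (fun kl : ℕ × ℕ =>
    (((kl.1 + 1) * (kl.2 + 1) : ℕ) : ℝ) * ‖x kl.1 kl.2‖)}

/-- `BV`: double sequences of bounded variation. -/
def BVset : Set DSeq :=
  {x | Summable (fun kl : ℕ × ℕ => ‖dDiff x kl.1 kl.2‖)}

/-- The rectangular section `x^{[m,n]}`. -/
def sect (x : DSeq) (m n : ℕ) : DSeq :=
  fun k l => if k ≤ m ∧ l ≤ n then x k l else 0

/-- `sup_{k,l ≥ N} |x_{k,l}|` valued in `ℝ≥0∞`. -/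
def supTail (x : DSeq) (N : ℕ) : ENNReal :=
  ⨆ k : ℕ, ⨆ l : ℕ, if N ≤ k ∧ N ≤ l then (‖x k l‖₊ : ENNReal) else 0

/-- The seminorm on `H_p`: `Σ kl|Δx| + lim_N sup_{k,l≥N} |x_{k,l}|`
(the limit written as a limsup, which agrees with the limit whenever it exists). -/
def hpSemi (x : DSeq) : ℝ :=
  hNorm x + (Filter.limsup (supTail x) atTop).toReal

/-- The element `d^{(k,l)}` of the determining set. -/
def dkl (k l : ℕ) : DSeq :=
  fun i j => if i ≤ k ∧ j ≤ l then (1 / (((k : ℂ) + 1) * ((l : ℂ) + 1))) else 0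

/-- Finitely supported double sequences (the set `φ`). -/
def FinSupp (x : DSeq) : Prop :=
  ∃ M : ℕ, ∀ k l : ℕ, (M ≤ k ∨ M ≤ l) → x k l = 0

/-- A 4D matrix `B` belongs to the class `(X, Y)`: for every `x ∈ X` the rectangular
partial sums of every row are bounded and Pringsheim convergent, and the resulting
double sequence of limits `Bx` belongs to `Y`. -/
def MatDom (B : ℕ → ℕ → DSeq) (X Y : Set DSeq) : Prop :=
  ∀ x ∈ X, ∃ y ∈ Y, ∀ m n : ℕ, BPConv (pSum (B m n) x) (y m n)

/-- The associated 4D matrix `E`, `e_{m,n,k,l} = (1/(kl)) Σ_{i≤k,j≤l} a_{m,n,i,j}`. -/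
def Emat (A : ℕ → ℕ → DSeq) (m n : ℕ) : DSeq :=
  fun k l => (1 / (((k : ℂ) + 1) * ((l : ℂ) + 1))) * rectSum (A m n) k l

/-- The difference `Δ^{11}_{mn}` applied to the first pair of indices of a 4D matrix. -/
def d11 (A : ℕ → ℕ → DSeq) (m n k l : ℕ) : ℂ :=
  A m n k l - A (m + 1) n k l - A m (n + 1) k l + A (m + 1) (n + 1) k l

/-- The double sequence `x_{k,l} = 1/(kl)²`. -/
def xSq : DSeq := fun k l => 1 / ((((k : ℂ) + 1) * ((l : ℂ) + 1)) ^ 2)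

/-- Auxiliary: nonnegativity of weighted terms. -/
lemma weight_nonneg (kl : ℕ × ℕ) (r : ℝ) (hr : 0 ≤ r) :
    0 ≤ (((kl.1 + 1) * (kl.2 + 1) : ℕ) : ℝ) * r := by positivity

/-- Weighted shifted sums are summable and dominated by the full weighted sum. -/
lemma shift_le {x : DSeq} (h : x ∈ intLu) (a b : ℕ) :
    Summable (fun kl : ℕ × ℕ =>
      (((kl.1 + 1) * (kl.2 + 1) : ℕ) : ℝ) * ‖x (kl.1 + a) (kl.2 + b)‖) ∧
    (∑' kl : ℕ × ℕ, (((kl.1 + 1) * (kl.2 + 1) : ℕ) : ℝ) * ‖x (kl.1 + a) (kl.2 + b)‖)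
      ≤ ∑' kl : ℕ × ℕ, (((kl.1 + 1) * (kl.2 + 1) : ℕ) : ℝ) * ‖x kl.1 kl.2‖ := by
  have hF : Summable (fun kl : ℕ × ℕ =>
      (((kl.1 + 1) * (kl.2 + 1) : ℕ) : ℝ) * ‖x kl.1 kl.2‖) := h
  set e : ℕ × ℕ → ℕ × ℕ := fun kl => (kl.1 + a, kl.2 + b) with he
  have e_inj : Function.Injective e := by
    intro p q hpq
    simp only [he, Prod.mk.injEq] at hpq
    exact Prod.ext (by omega) (by omega)
  have hle : ∀ kl : ℕ × ℕ,
      (((kl.1 + 1) * (kl.2 + 1) : ℕ) : ℝ) * ‖x (kl.1 + a) (kl.2 + b)‖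
        ≤ ((((e kl).1 + 1) * ((e kl).2 + 1) : ℕ) : ℝ) * ‖x (e kl).1 (e kl).2‖ := by
    intro kl
    apply mul_le_mul_of_nonneg_right _ (norm_nonneg _)
    have : (kl.1 + 1) * (kl.2 + 1) ≤ (kl.1 + a + 1) * (kl.2 + b + 1) :=
      Nat.mul_le_mul (by omega) (by omega)
    exact_mod_cast this
  have hg : Summable (fun kl : ℕ × ℕ =>
      (((kl.1 + 1) * (kl.2 + 1) : ℕ) : ℝ) * ‖x (kl.1 + a) (kl.2 + b)‖) := by
    refine Summable.of_nonneg_of_le (fun kl => weight_nonneg kl _ (norm_nonneg _))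
      hle (hF.comp_injective e_inj)
  exact ⟨hg, Summable.tsum_le_tsum_of_inj e e_inj
    (fun c _ => weight_nonneg c _ (norm_nonneg _)) hle hg hF⟩

/-- Every `x ∈ ∫L_u` is Hahn-summable with `hNorm x ≤ 4 Σ kl|x|`. -/
lemma intLu_hahnSummable {x : DSeq} (h : x ∈ intLu) :
    HahnSummable x ∧ hNorm x ≤ 4 * ∑' kl : ℕ × ℕ,
      (((kl.1 + 1) * (kl.2 + 1) : ℕ) : ℝ) * ‖x kl.1 kl.2‖ := by
  obtain ⟨s00, t00⟩ := shift_le h 0 0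
  obtain ⟨s10, t10⟩ := shift_le h 1 0
  obtain ⟨s01, t01⟩ := shift_le h 0 1
  obtain ⟨s11, t11⟩ := shift_le h 1 1
  simp only [Nat.add_zero] at s00 t00 s10 t10 s01 t01 s11 t11
  set g : ℕ × ℕ → ℝ := fun kl =>
    (((kl.1 + 1) * (kl.2 + 1) : ℕ) : ℝ) * ‖x kl.1 kl.2‖
    + (((kl.1 + 1) * (kl.2 + 1) : ℕ) : ℝ) * ‖x (kl.1 + 1) kl.2‖
    + (((kl.1 + 1) * (kl.2 + 1) : ℕ) : ℝ) * ‖x kl.1 (kl.2 + 1)‖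
    + (((kl.1 + 1) * (kl.2 + 1) : ℕ) : ℝ) * ‖x (kl.1 + 1) (kl.2 + 1)‖ with hgdef
  have hgsum : Summable g := ((s00.add s10).add s01).add s11
  have key : ∀ kl : ℕ × ℕ,
      (((kl.1 + 1) * (kl.2 + 1) : ℕ) : ℝ) * ‖dDiff x kl.1 kl.2‖ ≤ g kl := by
    intro kl
    have habs : ‖dDiff x kl.1 kl.2‖ ≤
        ‖x kl.1 kl.2‖ + ‖x (kl.1 + 1) kl.2‖
        + ‖x kl.1 (kl.2 + 1)‖ + ‖x (kl.1 + 1) (kl.2 + 1)‖ := by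
      unfold dDiff
      calc ‖x kl.1 kl.2 - x (kl.1 + 1) kl.2 - x kl.1 (kl.2 + 1)
            + x (kl.1 + 1) (kl.2 + 1)‖
          ≤ ‖x kl.1 kl.2 - x (kl.1 + 1) kl.2 - x kl.1 (kl.2 + 1)‖
            + ‖x (kl.1 + 1) (kl.2 + 1)‖ := norm_add_le _ _
        _ ≤ (‖x kl.1 kl.2 - x (kl.1 + 1) kl.2‖ + ‖x kl.1 (kl.2 + 1)‖)
            + ‖x (kl.1 + 1) (kl.2 + 1)‖ := by
            gcongr
            exact norm_sub_le _ _
        _ ≤ ((‖x kl.1 kl.2‖ + ‖x (kl.1 + 1) kl.2‖)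
            + ‖x kl.1 (kl.2 + 1)‖)
            + ‖x (kl.1 + 1) (kl.2 + 1)‖ := by
            gcongr
            exact norm_sub_le _ _
        _ = _ := by ring
    calc (((kl.1 + 1) * (kl.2 + 1) : ℕ) : ℝ) * ‖dDiff x kl.1 kl.2‖
        ≤ (((kl.1 + 1) * (kl.2 + 1) : ℕ) : ℝ) *
          (‖x kl.1 kl.2‖ + ‖x (kl.1 + 1) kl.2‖
          + ‖x kl.1 (kl.2 + 1)‖ + ‖x (kl.1 + 1) (kl.2 + 1)‖) := by
          apply mul_le_mul_of_nonneg_left habs (by positivity)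
      _ = g kl := by simp only [hgdef]; ring
  have hHS : HahnSummable x :=
    Summable.of_nonneg_of_le (fun kl => weight_nonneg kl _ (norm_nonneg _)) key hgsum
  refine ⟨hHS, ?_⟩
  have h1 : hNorm x ≤ ∑' kl, g kl := Summable.tsum_le_tsum key hHS hgsum
  have h2 : ∑' kl, g kl = (∑' kl : ℕ × ℕ, (((kl.1 + 1) * (kl.2 + 1) : ℕ) : ℝ) * ‖x kl.1 kl.2‖)
      + (∑' kl : ℕ × ℕ, (((kl.1 + 1) * (kl.2 + 1) : ℕ) : ℝ) * ‖x (kl.1 + 1) kl.2‖)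
      + (∑' kl : ℕ × ℕ, (((kl.1 + 1) * (kl.2 + 1) : ℕ) : ℝ) * ‖x kl.1 (kl.2 + 1)‖)
      + (∑' kl : ℕ × ℕ, (((kl.1 + 1) * (kl.2 + 1) : ℕ) : ℝ) * ‖x (kl.1 + 1) (kl.2 + 1)‖) := by
    simp only [hgdef]
    rw [Summable.tsum_add ((s00.add s10).add s01) s11, Summable.tsum_add (s00.add s10) s01, Summable.tsum_add s00 s10]
  rw [h2] at h1
  linarith [t10, t01, t11]

lemma abs_le_weighted (x : DSeq) (kl : ℕ × ℕ) :
    ‖x kl.1 kl.2‖ ≤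
      (((kl.1 + 1) * (kl.2 + 1) : ℕ) : ℝ) * ‖x kl.1 kl.2‖ := by
  have h1 : (1 : ℝ) ≤ (((kl.1 + 1) * (kl.2 + 1) : ℕ) : ℝ) := by
    have : (1 : ℕ) ≤ (kl.1 + 1) * (kl.2 + 1) := Nat.one_le_iff_ne_zero.mpr (by positivity)
    exact_mod_cast this
  nlinarith [norm_nonneg (x kl.1 kl.2)]

lemma intLu_abs_summable {x : DSeq} (h : x ∈ intLu) :
    Summable (fun kl : ℕ × ℕ => ‖x kl.1 kl.2‖) :=
  Summable.of_nonneg_of_le (fun kl => norm_nonneg _) (abs_le_weighted x) h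

/-- Cofinite smallness gives Pringsheim convergence to 0. -/
lemma pconv_of_summable_abs {x : DSeq}
    (h : Summable (fun kl : ℕ × ℕ => ‖x kl.1 kl.2‖)) : PConv x 0 := by
  intro ε hε
  have hz : Tendsto (fun kl : ℕ × ℕ => ‖x kl.1 kl.2‖) cofinite (nhds 0) :=
    h.tendsto_cofinite_zero
  have hev : ∀ᶠ kl : ℕ × ℕ in cofinite, ‖x kl.1 kl.2‖ < ε :=
    hz.eventually (eventually_lt_nhds hε)
  rw [Filter.eventually_cofinite] at hev
  refine ⟨hev.toFinset.sup (fun kl => max kl.1 kl.2) + 1, fun k hk l hl => ?_⟩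
  simp only [sub_zero]
  by_contra hcon
  push_neg at hcon
  have hmem : (k, l) ∈ hev.toFinset := hev.mem_toFinset.mpr (by simpa using hcon)
  have := Finset.le_sup (f := fun kl : ℕ × ℕ => max kl.1 kl.2) hmem
  simp only [le_max_iff] at this
  omega

lemma intLu_thconv {x : DSeq} (h : x ∈ intLu) (θ : Theta) : ThConv θ x 0 := by
  have habs := intLu_abs_summable h
  have hp : PConv x 0 := pconv_of_summable_abs habs
  have hbdd : DBounded x := by
    refine ⟨∑' kl : ℕ × ℕ, ‖x kl.1 kl.2‖, fun k l => ?_⟩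
    exact Summable.le_tsum habs (k, l) (fun _ _ => norm_nonneg _)
  have hrow : ∀ k : ℕ, Tendsto (fun l => x k l) atTop (nhds 0) := by
    intro k
    have hs : Summable (fun l : ℕ => ‖x k l‖) :=
      habs.comp_injective (i := fun l : ℕ => ((k, l) : ℕ × ℕ))
        (fun a b hab => by simpa using hab)
    rw [tendsto_zero_iff_norm_tendsto_zero]
    simpa using hs.tendsto_atTop_zero
  have hcol : ∀ l : ℕ, Tendsto (fun k => x k l) atTop (nhds 0) := by
    intro l
    have hs : Summable (fun k : ℕ => ‖x k l‖) :=
      habs.comp_injective (i := fun k : ℕ => ((k, l) : ℕ × ℕ))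
        (fun a b hab => by simpa using hab)
    rw [tendsto_zero_iff_norm_tendsto_zero]
    simpa using hs.tendsto_atTop_zero
  cases θ with
  | p => exact hp
  | bp => exact ⟨hp, hbdd⟩
  | r => exact ⟨hp, fun k => ⟨0, hrow k⟩, fun l => ⟨0, hcol l⟩⟩

lemma kcast_ne (k : ℕ) : ((k : ℂ) + 1) ≠ 0 := by
  have h : ((k : ℂ) + 1) = ((k + 1 : ℕ) : ℂ) := by push_cast; ring
  rw [h]; exact_mod_cast Nat.succ_ne_zero k

lemma kcast2_ne (k : ℕ) : ((k : ℂ) + 2) ≠ 0 := by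
  have h : ((k : ℂ) + 2) = ((k + 2 : ℕ) : ℂ) := by push_cast; ring
  rw [h]
  exact_mod_cast (by omega : k + 2 ≠ 0)

lemma abs_add_one (k : ℕ) : ‖(k : ℂ) + 1‖ = (k : ℝ) + 1 := by
  have h : ((k : ℂ) + 1) = ((k + 1 : ℕ) : ℂ) := by push_cast; ring
  rw [h, Complex.norm_natCast]; push_cast; ring

lemma xSq_abs (k l : ℕ) :
    ‖xSq k l‖ = 1 / ((((k : ℝ) + 1) * ((l : ℝ) + 1)) ^ 2) := by
  unfold xSq
  rw [norm_div, norm_pow, norm_mul, abs_add_one, abs_add_one, norm_one]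

lemma xSq_ofReal (k l : ℕ) :
    xSq k l = ((1 / ((((k : ℝ) + 1) * ((l : ℝ) + 1)) ^ 2) : ℝ) : ℂ) := by
  unfold xSq
  push_cast
  ring

set_option maxHeartbeats 1000000 in
lemma dDiff_xSq (k l : ℕ) :
    dDiff xSq k l = ((((1 / ((k : ℝ) + 1) ^ 2 - 1 / ((k : ℝ) + 2) ^ 2)
      * (1 / ((l : ℝ) + 1) ^ 2 - 1 / ((l : ℝ) + 2) ^ 2)) : ℝ) : ℂ) := by
  unfold dDiff
  rw [xSq_ofReal, xSq_ofReal, xSq_ofReal, xSq_ofReal]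
  rw [← Complex.ofReal_sub, ← Complex.ofReal_sub, ← Complex.ofReal_add]
  congr 1
  have h1 : ((k : ℝ) + 1) ≠ 0 := by positivity
  have h2 : ((k : ℝ) + 2) ≠ 0 := by positivity
  have h3 : ((l : ℝ) + 1) ≠ 0 := by positivity
  have h4 : ((l : ℝ) + 2) ≠ 0 := by positivity
  push_cast
  field_simp
  ring

lemma factor_nonneg (k : ℕ) : 0 ≤ 1 / ((k : ℝ) + 1) ^ 2 - 1 / ((k : ℝ) + 2) ^ 2 := by
  have h1 : (0:ℝ) < ((k : ℝ) + 1) ^ 2 := by positivity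
  have h2 : ((k : ℝ) + 1) ^ 2 ≤ ((k : ℝ) + 2) ^ 2 := by nlinarith [Nat.cast_nonneg (α := ℝ) k]
  have := one_div_le_one_div_of_le h1 h2
  linarith

lemma dDiff_xSq_abs (k l : ℕ) :
    ‖dDiff xSq k l‖ = (1 / ((k : ℝ) + 1) ^ 2 - 1 / ((k : ℝ) + 2) ^ 2)
      * (1 / ((l : ℝ) + 1) ^ 2 - 1 / ((l : ℝ) + 2) ^ 2) := by
  rw [dDiff_xSq, Complex.norm_real, Real.norm_eq_abs,
    abs_of_nonneg (mul_nonneg (factor_nonneg k) (factor_nonneg l))]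

lemma factor_bound (k : ℕ) :
    ((k : ℝ) + 1) * (1 / ((k : ℝ) + 1) ^ 2 - 1 / ((k : ℝ) + 2) ^ 2) ≤ 2 / ((k : ℝ) + 1) ^ 2 := by
  have h1 : ((k : ℝ) + 1) ≠ 0 := by positivity
  have h2 : ((k : ℝ) + 2) ≠ 0 := by positivity
  have key : ((k : ℝ) + 1) * (1 / ((k : ℝ) + 1) ^ 2 - 1 / ((k : ℝ) + 2) ^ 2)
      = (2 * (k : ℝ) + 3) / (((k : ℝ) + 1) * ((k : ℝ) + 2) ^ 2) := by
    field_simp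
    ring
  rw [key, div_le_div_iff₀ (by positivity) (by positivity)]
  nlinarith [Nat.cast_nonneg (α := ℝ) k]

set_option maxHeartbeats 1000000 in
lemma summable_aux : Summable (fun n : ℕ => 2 / ((n : ℝ) + 1) ^ 2) := by
  have h2 : Summable (fun n : ℕ => 1 / ((n : ℝ)) ^ 2) :=
    Real.summable_one_div_nat_pow.mpr one_lt_two
  have h3 : Summable (fun n : ℕ => 1 / (((n + 1 : ℕ)) : ℝ) ^ 2) :=
    (summable_nat_add_iff 1).mpr h2
  have h4 : Summable (fun n : ℕ => 1 / ((n : ℝ) + 1) ^ 2) := by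
    convert h3 using 2 with n
    push_cast; ring
  simpa [div_eq_mul_inv] using h4.mul_left 2

set_option maxHeartbeats 1000000 in
lemma xSq_hahnSummable : HahnSummable xSq := by
  unfold HahnSummable
  have hb : Summable (fun kl : ℕ × ℕ =>
      (2 / ((kl.1 : ℝ) + 1) ^ 2) * (2 / ((kl.2 : ℝ) + 1) ^ 2)) :=
    Summable.mul_of_nonneg summable_aux summable_aux
      (fun n => by positivity) (fun n => by positivity)
  refine Summable.of_nonneg_of_le
    (fun kl => weight_nonneg kl _ (norm_nonneg _)) (fun kl => ?_) hb
  rw [dDiff_xSq_abs]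
  have hw : (((kl.1 + 1) * (kl.2 + 1) : ℕ) : ℝ) = ((kl.1 : ℝ) + 1) * ((kl.2 : ℝ) + 1) := by
    push_cast; ring
  rw [hw]
  calc ((kl.1 : ℝ) + 1) * ((kl.2 : ℝ) + 1) *
      ((1 / ((kl.1 : ℝ) + 1) ^ 2 - 1 / ((kl.1 : ℝ) + 2) ^ 2)
        * (1 / ((kl.2 : ℝ) + 1) ^ 2 - 1 / ((kl.2 : ℝ) + 2) ^ 2))
      = (((kl.1 : ℝ) + 1) * (1 / ((kl.1 : ℝ) + 1) ^ 2 - 1 / ((kl.1 : ℝ) + 2) ^ 2))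
        * (((kl.2 : ℝ) + 1) * (1 / ((kl.2 : ℝ) + 1) ^ 2 - 1 / ((kl.2 : ℝ) + 2) ^ 2)) := by ring
    _ ≤ (2 / ((kl.1 : ℝ) + 1) ^ 2) * (2 / ((kl.2 : ℝ) + 1) ^ 2) := by
        apply mul_le_mul (factor_bound _) (factor_bound _)
        · exact mul_nonneg (by positivity) (factor_nonneg _)
        · positivity

lemma prod_sq_ge (k l : ℕ) :
    ((k : ℝ) + 1) * ((l : ℝ) + 1) ≤ ((((k : ℝ) + 1) * ((l : ℝ) + 1)) ^ 2) := by
  have h1 : (1:ℝ) ≤ ((k : ℝ) + 1) * ((l : ℝ) + 1) := by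
    nlinarith [Nat.cast_nonneg (α := ℝ) k, Nat.cast_nonneg (α := ℝ) l]
  exact le_self_pow₀ h1 (by norm_num)

lemma xSq_thconv (θ : Theta) : ThConv θ xSq 0 := by
  have hp : PConv xSq 0 := by
    intro ε hε
    obtain ⟨N, hN⟩ := exists_nat_gt (1 / ε)
    refine ⟨N, fun k hk l hl => ?_⟩
    rw [sub_zero, xSq_abs]
    have hk1 : (N : ℝ) + 1 ≤ (k : ℝ) + 1 := by
      have : (N : ℝ) ≤ (k : ℝ) := by exact_mod_cast hk
      linarith
    have hl1 : (1:ℝ) ≤ (l : ℝ) + 1 := by linarith [Nat.cast_nonneg (α := ℝ) l]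
    have hbig : (N : ℝ) + 1 ≤ (((k : ℝ) + 1) * ((l : ℝ) + 1)) ^ 2 := by
      have h2 : (k : ℝ) + 1 ≤ ((k : ℝ) + 1) * ((l : ℝ) + 1) :=
        le_mul_of_one_le_right (by positivity) hl1
      have h3 := prod_sq_ge k l
      linarith
    calc 1 / ((((k : ℝ) + 1) * ((l : ℝ) + 1)) ^ 2)
        ≤ 1 / ((N : ℝ) + 1) := one_div_le_one_div_of_le (by positivity) hbig
      _ < ε := by
          rw [div_lt_iff₀ (by positivity)]
          rw [div_lt_iff₀ hε] at hN
          nlinarith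
  have hbdd : DBounded xSq := by
    refine ⟨1, fun k l => ?_⟩
    rw [xSq_abs, div_le_one (by positivity)]
    have h1 : (1:ℝ) ≤ ((k : ℝ) + 1) * ((l : ℝ) + 1) := by
      nlinarith [Nat.cast_nonneg (α := ℝ) k, Nat.cast_nonneg (α := ℝ) l]
    nlinarith [prod_sq_ge k l]
  have hrow : ∀ k : ℕ, Tendsto (fun l => xSq k l) atTop (nhds 0) := by
    intro k
    rw [tendsto_zero_iff_norm_tendsto_zero]
    apply squeeze_zero (fun l => norm_nonneg _) (g := fun l : ℕ => 1 / ((l : ℝ) + 1))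
      _ tendsto_one_div_add_atTop_nhds_zero_nat
    intro l
    rw [xSq_abs]
    apply one_div_le_one_div_of_le (by positivity)
    have h2 : (l : ℝ) + 1 ≤ ((k : ℝ) + 1) * ((l : ℝ) + 1) := by
      nlinarith [Nat.cast_nonneg (α := ℝ) k, Nat.cast_nonneg (α := ℝ) l]
    linarith [prod_sq_ge k l]
  have hcol : ∀ l : ℕ, Tendsto (fun k => xSq k l) atTop (nhds 0) := by
    intro l
    rw [tendsto_zero_iff_norm_tendsto_zero]
    apply squeeze_zero (fun k => norm_nonneg _) (g := fun k : ℕ => 1 / ((k : ℝ) + 1))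
      _ tendsto_one_div_add_atTop_nhds_zero_nat
    intro k
    rw [xSq_abs]
    apply one_div_le_one_div_of_le (by positivity)
    have h2 : (k : ℝ) + 1 ≤ ((k : ℝ) + 1) * ((l : ℝ) + 1) := by
      nlinarith [Nat.cast_nonneg (α := ℝ) k, Nat.cast_nonneg (α := ℝ) l]
    linarith [prod_sq_ge k l]
  cases θ with
  | p => exact hp
  | bp => exact ⟨hp, hbdd⟩
  | r => exact ⟨hp, fun k => ⟨0, hrow k⟩, fun l => ⟨0, hcol l⟩⟩

lemma xSq_not_intLu : xSq ∉ intLu := by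
  intro h
  have hcomp : Summable ((fun kl : ℕ × ℕ =>
      (((kl.1 + 1) * (kl.2 + 1) : ℕ) : ℝ) * ‖xSq kl.1 kl.2‖)
      ∘ (fun l : ℕ => (((0:ℕ), l) : ℕ × ℕ))) :=
    Summable.comp_injective h (fun a b hab => by simpa using hab)
  have heq : ((fun kl : ℕ × ℕ =>
      (((kl.1 + 1) * (kl.2 + 1) : ℕ) : ℝ) * ‖xSq kl.1 kl.2‖)
      ∘ (fun l : ℕ => (((0:ℕ), l) : ℕ × ℕ)))
      = fun l : ℕ => 1 / ((l : ℝ) + 1) := by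
    funext l
    simp only [Function.comp_apply]
    rw [xSq_abs]
    have hl : ((l : ℝ) + 1) ≠ 0 := by positivity
    push_cast
    field_simp
    ring
  rw [heq] at hcomp
  have h1 : Summable (fun n : ℕ => 1 / (((n + 1 : ℕ)) : ℝ)) := by
    convert hcomp using 2 with n
    push_cast; ring
  exact Real.not_summable_one_div_natCast ((summable_nat_add_iff 1).mp h1)

/-- `∫L_u ⊆ H_ϑ` strictly, with the quantitative bound
`Σ kl|Δx| ≤ 4 Σ kl|x|`; the sequence `1/(kl)²` lies in `H_ϑ \ ∫L_u`. -/
theorem statement_7 (θ : Theta) :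
    (∀ x ∈ intLu, x ∈ Hahn θ ∧
      hNorm x ≤ 4 * ∑' kl : ℕ × ℕ,
        (((kl.1 + 1) * (kl.2 + 1) : ℕ) : ℝ) * ‖x kl.1 kl.2‖) ∧
    xSq ∈ Hahn θ ∧ xSq ∉ intLu := by
  refine ⟨fun x hx => ?_, ⟨xSq_hahnSummable, xSq_thconv θ⟩, xSq_not_intLu⟩
  obtain ⟨hHS, hbound⟩ := intLu_hahnSummable hx
  exact ⟨⟨hHS, intLu_thconv hx θ⟩, hbound⟩
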